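/- Let σ = (σ_k)_{k≥1} be a non-increasing sequence of positive real numbers with σ_k → 0. Then the following are equivalent: (i) there exist constants c₁, c₂ > 0 such that c₁ σ_n ≤ σ_{2n} ≤ c₂ σ_n for all n ≥ 1; (ii) there exist constants c₁, c₂ > 0 such that c₁ σ_n ≤ (σ_1 · σ_2 · … · σ_n)^{1/n} ≤ c₂ σ_n for all n ≥ 1. -/

import Mathlib

open Filter

private lemma prod_split15 (σ : ℕ → ℝ) {m k : ℕ} (hmk : m ≤ k) :
    ∏ i ∈ Finset.Icc 1 k, σ i =
      (∏ i ∈ Finset.Icc 1 m, σ i) * ∏ i ∈ Finset.Ioc m k, σ i := by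
  rw [show Finset.Icc 1 k = Finset.Ioc 0 k from Finset.Icc_add_one_left_eq_Ioc (a := 0) (b := k),
    show Finset.Icc 1 m = Finset.Ioc 0 m from Finset.Icc_add_one_left_eq_Ioc (a := 0) (b := m),
    Finset.prod_Ioc_consecutive σ (Nat.zero_le m) hmk]

private lemma key15 (σ : ℕ → ℝ)
    (hpos : ∀ k, 1 ≤ k → 0 < σ k)
    (hanti : ∀ m n : ℕ, 1 ≤ m → m ≤ n → σ n ≤ σ m)
    (b : ℝ) (hb1 : 1 ≤ b)
    (hstep : ∀ n, 1 ≤ n → σ n ≤ b * σ (2 * n)) :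
    ∀ n, 1 ≤ n → ∏ i ∈ Finset.Icc 1 n, σ i ≤ (b ^ 4 * σ n) ^ n := by
  have hb0 : (0:ℝ) < b := lt_of_lt_of_le one_pos hb1
  intro n
  induction n using Nat.strong_induction_on with
  | _ n ih =>
  intro hn
  rcases eq_or_lt_of_le hn with h1 | h2
  · subst h1
    simp only [Finset.Icc_self, Finset.prod_singleton, pow_one]
    have hb4 : (1:ℝ) ≤ b ^ 4 := one_le_pow₀ hb1
    nlinarith [hpos 1 le_rfl]
  · rcases Nat.even_or_odd n with ⟨m, hm⟩ | ⟨m, hm⟩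
    · -- n = 2m
      have hm2 : n = 2 * m := by omega
      subst hm2
      have hm1 : 1 ≤ m := by omega
      have hσm : 0 < σ m := hpos m hm1
      have hσ2m : 0 < σ (2 * m) := hpos _ (by omega)
      have hP1 := ih m (by omega) hm1
      have hP2 : ∏ i ∈ Finset.Ioc m (2 * m), σ i ≤ σ m ^ m := by
        calc ∏ i ∈ Finset.Ioc m (2 * m), σ i
            ≤ ∏ _i ∈ Finset.Ioc m (2 * m), σ m := by
              apply Finset.prod_le_prod
              · intro i hi
                have := (Finset.mem_Ioc.mp hi).1
                exact (hpos i (by omega)).le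
              · intro i hi
                exact hanti m i hm1 (le_of_lt (Finset.mem_Ioc.mp hi).1)
          _ = σ m ^ m := by rw [Finset.prod_const, Nat.card_Ioc]; congr 1; omega
      have h3 : σ m ≤ b * σ (2 * m) := hstep m hm1
      calc ∏ i ∈ Finset.Icc 1 (2 * m), σ i
          = (∏ i ∈ Finset.Icc 1 m, σ i) * ∏ i ∈ Finset.Ioc m (2 * m), σ i :=
            prod_split15 σ (by omega)
        _ ≤ (b ^ 4 * σ m) ^ m * σ m ^ m := by
            refine mul_le_mul hP1 hP2 ?_ (by positivity)
            exact Finset.prod_nonneg fun i hi => by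
              have := (Finset.mem_Ioc.mp hi).1
              exact (hpos i (by omega)).le
        _ = (b ^ 4) ^ m * σ m ^ (2 * m) := by
            rw [mul_pow, mul_assoc, ← pow_add, two_mul]
        _ ≤ (b ^ 4) ^ m * (b * σ (2 * m)) ^ (2 * m) := by
            apply mul_le_mul_of_nonneg_left _ (by positivity)
            exact pow_le_pow_left₀ hσm.le h3 _
        _ = (b ^ 4) ^ m * b ^ (2 * m) * σ (2 * m) ^ (2 * m) := by
            rw [mul_pow]; ring
        _ ≤ (b ^ 4) ^ (2 * m) * σ (2 * m) ^ (2 * m) := by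
            apply mul_le_mul_of_nonneg_right _ (by positivity)
            rw [← pow_mul, ← pow_add, ← pow_mul]
            exact pow_le_pow_right₀ hb1 (by omega)
        _ = (b ^ 4 * σ (2 * m)) ^ (2 * m) := (mul_pow _ _ _).symm
    · -- n = 2m + 1
      subst hm
      have hm1 : 1 ≤ m := by omega
      have hσm : 0 < σ m := hpos m hm1
      have hσn : 0 < σ (2 * m + 1) := hpos _ (by omega)
      have hP1 := ih m (by omega) hm1
      have hP2 : ∏ i ∈ Finset.Ioc m (2 * m + 1), σ i ≤ σ m ^ (m + 1) := by
        calc ∏ i ∈ Finset.Ioc m (2 * m + 1), σ i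
            ≤ ∏ _i ∈ Finset.Ioc m (2 * m + 1), σ m := by
              apply Finset.prod_le_prod
              · intro i hi
                have := (Finset.mem_Ioc.mp hi).1
                exact (hpos i (by omega)).le
              · intro i hi
                exact hanti m i hm1 (le_of_lt (Finset.mem_Ioc.mp hi).1)
          _ = σ m ^ (m + 1) := by rw [Finset.prod_const, Nat.card_Ioc]; congr 1; omega
      have h3 : σ m ≤ b ^ 2 * σ (2 * m + 1) := by
        have ha := hstep m hm1
        have hb' := hstep (2 * m) (by omega)
        have hc : σ (2 * (2 * m)) ≤ σ (2 * m + 1) :=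
          hanti (2 * m + 1) (2 * (2 * m)) (by omega) (by omega)
        nlinarith [hpos (2 * (2 * m)) (by omega), hpos (2 * m) (by omega)]
      calc ∏ i ∈ Finset.Icc 1 (2 * m + 1), σ i
          = (∏ i ∈ Finset.Icc 1 m, σ i) * ∏ i ∈ Finset.Ioc m (2 * m + 1), σ i :=
            prod_split15 σ (by omega)
        _ ≤ (b ^ 4 * σ m) ^ m * σ m ^ (m + 1) := by
            refine mul_le_mul hP1 hP2 ?_ (by positivity)
            exact Finset.prod_nonneg fun i hi => by
              have := (Finset.mem_Ioc.mp hi).1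
              exact (hpos i (by omega)).le
        _ = (b ^ 4) ^ m * σ m ^ (2 * m + 1) := by
            rw [mul_pow, mul_assoc, ← pow_add]
            ring_nf
        _ ≤ (b ^ 4) ^ m * (b ^ 2 * σ (2 * m + 1)) ^ (2 * m + 1) := by
            apply mul_le_mul_of_nonneg_left _ (by positivity)
            exact pow_le_pow_left₀ hσm.le h3 _
        _ = (b ^ 4) ^ m * (b ^ 2) ^ (2 * m + 1) * σ (2 * m + 1) ^ (2 * m + 1) := by
            rw [mul_pow]; ring
        _ ≤ (b ^ 4) ^ (2 * m + 1) * σ (2 * m + 1) ^ (2 * m + 1) := by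
            apply mul_le_mul_of_nonneg_right _ (by positivity)
            rw [← pow_mul, ← pow_mul, ← pow_add, ← pow_mul]
            exact pow_le_pow_right₀ hb1 (by omega)
        _ = (b ^ 4 * σ (2 * m + 1)) ^ (2 * m + 1) := (mul_pow _ _ _).symm

theorem statement15 (σ : ℕ → ℝ)
    (hpos : ∀ k, 1 ≤ k → 0 < σ k)
    (hanti : ∀ m n : ℕ, 1 ≤ m → m ≤ n → σ n ≤ σ m)
    (hlim : Tendsto σ atTop (nhds 0)) :
    (∃ c₁ c₂ : ℝ, 0 < c₁ ∧ 0 < c₂ ∧ ∀ n : ℕ, 1 ≤ n →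
        c₁ * σ n ≤ σ (2 * n) ∧ σ (2 * n) ≤ c₂ * σ n) ↔
    (∃ c₁ c₂ : ℝ, 0 < c₁ ∧ 0 < c₂ ∧ ∀ n : ℕ, 1 ≤ n →
        c₁ * σ n ≤ (∏ i ∈ Finset.Icc 1 n, σ i) ^ (1 / (n : ℝ)) ∧
        (∏ i ∈ Finset.Icc 1 n, σ i) ^ (1 / (n : ℝ)) ≤ c₂ * σ n) := by
  constructor
  · rintro ⟨c₁, c₂, hc₁, hc₂, h⟩
    -- c₁ ≤ 1
    have hc1le : c₁ ≤ 1 := by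
      have h1 := (h 1 le_rfl).1
      have h2 : σ (2 * 1) ≤ σ 1 := hanti 1 (2 * 1) le_rfl (by omega)
      nlinarith [hpos 1 le_rfl]
    have hb1 : 1 ≤ c₁⁻¹ := by
      nlinarith [mul_inv_cancel₀ (ne_of_gt hc₁), inv_pos.2 hc₁]
    have hstep : ∀ n, 1 ≤ n → σ n ≤ c₁⁻¹ * σ (2 * n) := by
      intro n hn
      have := mul_le_mul_of_nonneg_left (h n hn).1 (inv_pos.2 hc₁).le
      rwa [← mul_assoc, inv_mul_cancel₀ (ne_of_gt hc₁), one_mul] at this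
    refine ⟨1, c₁⁻¹ ^ 4, one_pos, by positivity, fun n hn => ?_⟩
    have hkey := key15 σ hpos hanti c₁⁻¹ hb1 hstep n hn
    have hσn : 0 < σ n := hpos n hn
    have hPpos : 0 < ∏ i ∈ Finset.Icc 1 n, σ i :=
      Finset.prod_pos fun i hi => hpos i (Finset.mem_Icc.mp hi).1
    have hn0 : n ≠ 0 := by omega
    constructor
    · rw [one_mul, one_div]
      have h1 : σ n ^ n ≤ ∏ i ∈ Finset.Icc 1 n, σ i := by
        calc σ n ^ n = ∏ _i ∈ Finset.Icc 1 n, σ n := by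
              rw [Finset.prod_const, Nat.card_Icc]; norm_num
          _ ≤ ∏ i ∈ Finset.Icc 1 n, σ i := by
              apply Finset.prod_le_prod
              · intro i hi; exact hσn.le
              · intro i hi
                exact hanti i n (Finset.mem_Icc.mp hi).1 (Finset.mem_Icc.mp hi).2
      calc σ n = (σ n ^ n) ^ ((n : ℝ)⁻¹) :=
            (Real.pow_rpow_inv_natCast hσn.le hn0).symm
        _ ≤ (∏ i ∈ Finset.Icc 1 n, σ i) ^ ((n : ℝ)⁻¹) :=
            Real.rpow_le_rpow (by positivity) h1 (by positivity)
    · rw [one_div]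
      calc (∏ i ∈ Finset.Icc 1 n, σ i) ^ ((n : ℝ)⁻¹)
          ≤ ((c₁⁻¹ ^ 4 * σ n) ^ n) ^ ((n : ℝ)⁻¹) :=
            Real.rpow_le_rpow hPpos.le hkey (by positivity)
        _ = c₁⁻¹ ^ 4 * σ n := Real.pow_rpow_inv_natCast (by positivity) hn0
  · rintro ⟨c₁, c₂, hc₁, hc₂, h⟩
    refine ⟨(c₂ ^ 2)⁻¹, 1, by positivity, one_pos, fun n hn => ?_⟩
    have hσn : 0 < σ n := hpos n hn
    have hσ2n : 0 < σ (2 * n) := hpos _ (by omega)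
    have hPpos : 0 < ∏ i ∈ Finset.Icc 1 (2 * n), σ i :=
      Finset.prod_pos fun i hi => hpos i (Finset.mem_Icc.mp hi).1
    have h2n := (h (2 * n) (by omega)).2
    have hPle : (∏ i ∈ Finset.Icc 1 (2 * n), σ i) ≤ (c₂ * σ (2 * n)) ^ (2 * n) := by
      have := pow_le_pow_left₀ (Real.rpow_nonneg hPpos.le _) h2n (2 * n)
      rwa [one_div, Real.rpow_inv_natCast_pow hPpos.le (by omega)] at this
    have hlow : σ n ^ n * σ (2 * n) ^ n ≤ ∏ i ∈ Finset.Icc 1 (2 * n), σ i := by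
      rw [prod_split15 σ (show n ≤ 2 * n by omega)]
      apply mul_le_mul
      · calc σ n ^ n = ∏ _i ∈ Finset.Icc 1 n, σ n := by
              rw [Finset.prod_const, Nat.card_Icc]; norm_num
          _ ≤ ∏ i ∈ Finset.Icc 1 n, σ i := by
              apply Finset.prod_le_prod
              · intro i hi; exact hσn.le
              · intro i hi
                exact hanti i n (Finset.mem_Icc.mp hi).1 (Finset.mem_Icc.mp hi).2
      · calc σ (2 * n) ^ n = ∏ _i ∈ Finset.Ioc n (2 * n), σ (2 * n) := by
              rw [Finset.prod_const, Nat.card_Ioc]; congr 1; omega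
          _ ≤ ∏ i ∈ Finset.Ioc n (2 * n), σ i := by
              apply Finset.prod_le_prod
              · intro i hi; exact hσ2n.le
              · intro i hi
                have := (Finset.mem_Ioc.mp hi).1
                exact hanti i (2 * n) (by omega) (Finset.mem_Ioc.mp hi).2
      · positivity
      · exact Finset.prod_nonneg fun i hi => (hpos i (Finset.mem_Icc.mp hi).1).le
    have hmain : σ n * σ (2 * n) ≤ (c₂ * σ (2 * n)) ^ 2 := by
      have h' : (σ n * σ (2 * n)) ^ n ≤ ((c₂ * σ (2 * n)) ^ 2) ^ n := by
        rw [mul_pow, ← pow_mul]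
        exact le_trans hlow hPle
      exact le_of_pow_le_pow_left₀ (by omega) (by positivity) h'
    constructor
    · have hs : σ n ≤ c₂ ^ 2 * σ (2 * n) := by nlinarith
      have hpos2 : (0:ℝ) < c₂ ^ 2 := by positivity
      nlinarith [mul_inv_cancel₀ (ne_of_gt hpos2), inv_pos.2 hpos2,
        mul_le_mul_of_nonneg_left hs (inv_pos.2 hpos2).le]
    · rw [one_mul]
      exact hanti n (2 * n) hn (by omega)
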